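/- arXiv:0802.3563 — 3 statements merged into one kernel-verified Lean document; each statement's English description precedes it below -/
import Mathlib

section
/- If P is a substochastic M×M matrix (nonnegative entries, row sums at most 1) such that from every index one can reach, through positive entries of powers of P, a row whose sum is strictly less than 1, then the spectral radius of P is strictly less than 1. -/
open Matrix Filter Finset

section Aux

variable {M : ℕ} (P : Matrix (Fin M) (Fin M) ℝ)

lemma aux_pow_nonneg (hnonneg : ∀ i j, 0 ≤ P i j) :
    ∀ t i j, 0 ≤ (P ^ t) i j := by
  intro t
  induction t with
  | zero => intro i j; by_cases h : i = j <;> simp [Matrix.one_apply, h]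
  | succ t ih =>
    intro i j
    rw [pow_succ, Matrix.mul_apply]
    exact Finset.sum_nonneg fun k _ => mul_nonneg (ih i k) (hnonneg k j)

lemma aux_rowsum_succ (t : ℕ) (i : Fin M) :
    ∑ j, (P ^ (t + 1)) i j = ∑ j, (P ^ t) i j * (∑ k, P j k) := by
  simp only [pow_succ, Matrix.mul_apply, Finset.mul_sum]
  exact Finset.sum_comm

lemma aux_rowsum_le_one (hnonneg : ∀ i j, 0 ≤ P i j) (hrow : ∀ i, ∑ j, P i j ≤ 1) :
    ∀ t i, ∑ j, (P ^ t) i j ≤ 1 := by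
  intro t
  induction t with
  | zero => intro i; simp [Matrix.one_apply]
  | succ t ih =>
    intro i
    rw [aux_rowsum_succ]
    calc ∑ j, (P ^ t) i j * (∑ k, P j k)
        ≤ ∑ j, (P ^ t) i j * 1 :=
          Finset.sum_le_sum fun j _ =>
            mul_le_mul_of_nonneg_left (hrow j) (aux_pow_nonneg P hnonneg t i j)
      _ = ∑ j, (P ^ t) i j := by simp
      _ ≤ 1 := ih i

lemma aux_rowsum_antitone (hnonneg : ∀ i j, 0 ≤ P i j) (hrow : ∀ i, ∑ j, P i j ≤ 1)
    (i : Fin M) : Antitone (fun t => ∑ j, (P ^ t) i j) := by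
  apply antitone_nat_of_succ_le
  intro t
  rw [aux_rowsum_succ]
  calc ∑ j, (P ^ t) i j * (∑ k, P j k)
      ≤ ∑ j, (P ^ t) i j * 1 :=
        Finset.sum_le_sum fun j _ =>
          mul_le_mul_of_nonneg_left (hrow j) (aux_pow_nonneg P hnonneg t i j)
    _ = ∑ j, (P ^ t) i j := by simp

lemma aux_rowsum_deficient (hnonneg : ∀ i j, 0 ≤ P i j) (hrow : ∀ i, ∑ j, P i j ≤ 1)
    {t : ℕ} {i j : Fin M} (hj : 0 < (P ^ t) i j) (hdef : ∑ k, P j k < 1) :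
    ∑ l, (P ^ (t + 1)) i l < 1 := by
  rw [aux_rowsum_succ]
  have h1 : ∑ l, (P ^ t) i l * (∑ k, P l k) < ∑ l, (P ^ t) i l * 1 := by
    apply Finset.sum_lt_sum
    · intro l _
      exact mul_le_mul_of_nonneg_left (hrow l) (aux_pow_nonneg P hnonneg t i l)
    · exact ⟨j, Finset.mem_univ j, by
        apply mul_lt_mul_of_pos_left hdef hj⟩
  calc ∑ l, (P ^ t) i l * (∑ k, P l k) < ∑ l, (P ^ t) i l * 1 := h1
    _ = ∑ l, (P ^ t) i l := by simp
    _ ≤ 1 := aux_rowsum_le_one P hnonneg hrow t i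

lemma aux_eigen {μ : ℂ} {A : Matrix (Fin M) (Fin M) ℂ} (hμ : μ ∈ spectrum ℂ A) :
    ∃ v : Fin M → ℂ, v ≠ 0 ∧ A *ᵥ v = μ • v := by
  rw [spectrum.mem_iff] at hμ
  have hdet : (algebraMap ℂ (Matrix (Fin M) (Fin M) ℂ) μ - A).det = 0 := by
    by_contra h
    exact hμ ((Matrix.isUnit_iff_isUnit_det _).2 (isUnit_iff_ne_zero.2 h))
  obtain ⟨v, hv0, hv⟩ := (Matrix.exists_mulVec_eq_zero_iff).2 hdet
  refine ⟨v, hv0, ?_⟩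
  have : algebraMap ℂ (Matrix (Fin M) (Fin M) ℂ) μ *ᵥ v = μ • v := by
    funext k
    simp [Matrix.algebraMap_eq_diagonal, Matrix.mulVec_diagonal, Pi.algebraMap_apply]
  rw [Matrix.sub_mulVec, sub_eq_zero] at hv
  rw [← hv, this]

lemma aux_mulVec_pow {A : Matrix (Fin M) (Fin M) ℂ} {μ : ℂ} {v : Fin M → ℂ}
    (hv : A *ᵥ v = μ • v) (n : ℕ) : (A ^ n) *ᵥ v = μ ^ n • v := by
  induction n with
  | zero => simp [Matrix.one_mulVec]
  | succ n ih =>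
    rw [pow_succ, ← Matrix.mulVec_mulVec, hv, Matrix.mulVec_smul, ih, smul_smul,
      pow_succ, mul_comm]

end Aux

/-- Spectral radius of a real matrix: spectral radius of its complexification. -/
noncomputable def specRad {M : ℕ} (P : Matrix (Fin M) (Fin M) ℝ) : ENNReal :=
  spectralRadius ℂ (P.map (algebraMap ℝ ℂ))

/-- A substochastic matrix from which every index reaches (via positive entries of
powers of `P`) a row with sum strictly less than one has spectral radius `< 1`. -/
theorem substochastic_reach_deficient_specRad_lt_one {M : ℕ}
    (P : Matrix (Fin M) (Fin M) ℝ)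
    (hnonneg : ∀ i j, 0 ≤ P i j)
    (hrow : ∀ i, ∑ j, P i j ≤ 1)
    (hreach : ∀ i : Fin M, ∃ (t : ℕ) (j : Fin M),
      0 < (P ^ t) i j ∧ ∑ k, P j k < 1) :
    specRad P < 1 := by
  classical
  set A := P.map (algebraMap ℝ ℂ) with hA
  rcases Nat.eq_zero_or_pos M with hM | hM
  · subst hM
    have hemp : spectrum ℂ A = ∅ := by
      ext μ
      simp [spectrum.mem_iff, isUnit_of_subsingleton]
    simp [specRad, spectralRadius, hemp]
  · obtain ⟨i0⟩ := Fin.pos_iff_nonempty.mp hM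
    choose t j ht hdef using hreach
    set N := Finset.univ.sup (fun i : Fin M => t i + 1) with hN
    have hN1 : ∀ i, t i + 1 ≤ N := fun i => Finset.le_sup (f := fun i : Fin M => t i + 1) (Finset.mem_univ i)
    have hNpos : 0 < N := lt_of_lt_of_le (Nat.succ_pos _) (hN1 i0)
    have hrN : ∀ i, ∑ l, (P ^ N) i l < 1 := fun i =>
      lt_of_le_of_lt (aux_rowsum_antitone P hnonneg hrow i (hN1 i))
        (aux_rowsum_deficient P hnonneg hrow (ht i) (hdef i))
    set c := Finset.univ.sup' ⟨i0, Finset.mem_univ i0⟩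
      (fun i => ∑ l, (P ^ N) i l) with hc
    have hc1 : c < 1 := (Finset.sup'_lt_iff _).2 fun i _ => hrN i
    have hcb : ∀ i, ∑ l, (P ^ N) i l ≤ c := fun i => Finset.le_sup' (fun i => ∑ l, (P ^ N) i l) (Finset.mem_univ i)
    have key : ∀ μ ∈ spectrum ℂ A, ‖μ‖₊ ≤ c.toNNReal ^ ((N : ℝ)⁻¹) := by
      intro μ hμ
      obtain ⟨v, hv0, hv⟩ := aux_eigen hμ
      obtain ⟨i, -, hi⟩ := Finset.exists_max_image Finset.univ (fun k => ‖v k‖)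
        ⟨i0, Finset.mem_univ i0⟩
      have hvi : 0 < ‖v i‖ := by
        obtain ⟨k, hk⟩ := Function.ne_iff.mp hv0
        exact lt_of_lt_of_le (norm_pos_iff.mpr hk) (hi k (Finset.mem_univ k))
      have hApow : A ^ N = (P ^ N).map (algebraMap ℝ ℂ) := by
        simp only [hA, ← RingHom.mapMatrix_apply, ← map_pow]
      have hentry : ((A ^ N) *ᵥ v) i = μ ^ N * v i := by
        rw [aux_mulVec_pow hv N]; rfl
      have h1 : ‖μ ^ N * v i‖ ≤ ∑ l, (P ^ N) i l * ‖v l‖ := by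
        rw [← hentry]
        calc ‖((A ^ N) *ᵥ v) i‖ = ‖∑ l, (A ^ N) i l * v l‖ := by
              simp [Matrix.mulVec, dotProduct]
          _ ≤ ∑ l, ‖(A ^ N) i l * v l‖ := norm_sum_le _ _
          _ = ∑ l, (P ^ N) i l * ‖v l‖ := Finset.sum_congr rfl fun l _ => by
              rw [hApow, norm_mul]
              simp [Matrix.map_apply, abs_of_nonneg (aux_pow_nonneg P hnonneg N i l)]
      have h2 : ∑ l, (P ^ N) i l * ‖v l‖ ≤ c * ‖v i‖ := by
        calc ∑ l, (P ^ N) i l * ‖v l‖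
            ≤ ∑ l, (P ^ N) i l * ‖v i‖ := Finset.sum_le_sum fun l _ =>
              mul_le_mul_of_nonneg_left (hi l (Finset.mem_univ l))
                (aux_pow_nonneg P hnonneg N i l)
          _ = (∑ l, (P ^ N) i l) * ‖v i‖ := by rw [Finset.sum_mul]
          _ ≤ c * ‖v i‖ := mul_le_mul_of_nonneg_right (hcb i) (norm_nonneg _)
      have hle : ‖μ‖ ^ N * ‖v i‖ ≤ c * ‖v i‖ := by
        have : ‖μ ^ N * v i‖ = ‖μ‖ ^ N * ‖v i‖ := by rw [norm_mul, norm_pow]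
        rw [← this]; exact le_trans h1 h2
      have hμN : ‖μ‖ ^ N ≤ c := le_of_mul_le_mul_right hle hvi
      have hc0 : (0 : ℝ) ≤ c := le_trans (pow_nonneg (norm_nonneg μ) N) hμN
      have h3 : ‖μ‖₊ ^ N ≤ c.toNNReal := by
        rw [← NNReal.coe_le_coe]
        simpa [Real.coe_toNNReal _ hc0] using hμN
      calc ‖μ‖₊ = (‖μ‖₊ ^ N) ^ ((N : ℝ)⁻¹) :=
            (NNReal.pow_rpow_inv_natCast _ hNpos.ne').symm
        _ ≤ c.toNNReal ^ ((N : ℝ)⁻¹) := NNReal.rpow_le_rpow h3 (by positivity)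
    have hb1 : c.toNNReal ^ ((N : ℝ)⁻¹) < 1 := by
      apply NNReal.rpow_lt_one _ (by positivity)
      rw [← Real.toNNReal_one]
      exact (Real.toNNReal_lt_toNNReal_iff one_pos).2 hc1
    calc specRad P = ⨆ μ ∈ spectrum ℂ A, (‖μ‖₊ : ENNReal) := rfl
      _ ≤ ((c.toNNReal ^ ((N : ℝ)⁻¹) : NNReal) : ENNReal) :=
          iSup₂_le fun μ hμ => ENNReal.coe_le_coe.2 (key μ hμ)
      _ < 1 := ENNReal.coe_lt_one_iff.2 hb1
end

section
/- Let p₁, p₂, p₃, p₄ be points in the plane, one in each of the four closed quadrant-sectors of a disk of radius r centered at a point l (each sector subtending angle π/2). Then l lies in the convex hull of {p₁, p₂, p₃, p₄}; moreover l lies in the convex hull of some 3-element subset of {p₁, p₂, p₃, p₄}. -/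
open Set

private lemma aux_interp (x y c : ℝ) (h1 : x ≤ c) (h2 : c ≤ y) :
    ∃ t : ℝ, 0 ≤ t ∧ t ≤ 1 ∧ (1 - t) * x + t * y = c := by
  rcases eq_or_lt_of_le (h1.trans h2) with h | h
  · exact ⟨0, le_refl 0, zero_le_one, by subst h; nlinarith⟩
  · refine ⟨(c - x) / (y - x), div_nonneg (by linarith) (by linarith),
      (div_le_one (by linarith)).2 (by linarith), ?_⟩
    have hne : y - x ≠ 0 := by linarith
    field_simp
    ring

private lemma seg_x (a b : ℝ × ℝ) (c : ℝ) (h1 : a.1 ≤ c) (h2 : c ≤ b.1) :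
    ∃ m ∈ segment ℝ a b, m.1 = c ∧ min a.2 b.2 ≤ m.2 ∧ m.2 ≤ max a.2 b.2 := by
  obtain ⟨t, ht0, ht1, hte⟩ := aux_interp a.1 b.1 c h1 h2
  refine ⟨(1 - t) • a + t • b, ⟨1 - t, t, by linarith, ht0, by ring, rfl⟩, ?_, ?_, ?_⟩
  · simpa using hte
  · have h1 := min_le_left a.2 b.2
    have h2 := min_le_right a.2 b.2
    simp only [Prod.snd_add, Prod.smul_snd, smul_eq_mul]
    nlinarith
  · have h1 := le_max_left a.2 b.2
    have h2 := le_max_right a.2 b.2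
    simp only [Prod.snd_add, Prod.smul_snd, smul_eq_mul]
    nlinarith

private lemma seg_y (u v : ℝ × ℝ) (d : ℝ) (hx : u.1 = v.1) (h1 : u.2 ≤ d) (h2 : d ≤ v.2) :
    (u.1, d) ∈ segment ℝ u v := by
  obtain ⟨t, ht0, ht1, hte⟩ := aux_interp u.2 v.2 d h1 h2
  refine ⟨1 - t, t, by linarith, ht0, by ring, ?_⟩
  apply Prod.ext
  · simp [hx]; ring
  · simpa using hte

/-- If each of the four closed quadrant-sectors (of angle π/2) of the disk of radius
`r` centered at `l ∈ ℝ²` contains one of the points `p 0, p 1, p 2, p 3`, then `l`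
lies in the convex hull of these four points, and moreover in the convex hull of some
three of them. -/
theorem mem_convexHull_of_sector_points (l : ℝ × ℝ) (r : ℝ) (hr : 0 < r)
    (p : Fin 4 → ℝ × ℝ)
    (hdist : ∀ i, dist (p i) l ≤ r)
    (h0 : l.1 ≤ (p 0).1 ∧ l.2 ≤ (p 0).2)
    (h1 : (p 1).1 ≤ l.1 ∧ l.2 ≤ (p 1).2)
    (h2 : (p 2).1 ≤ l.1 ∧ (p 2).2 ≤ l.2)
    (h3 : l.1 ≤ (p 3).1 ∧ (p 3).2 ≤ l.2) :
    l ∈ convexHull ℝ (Set.range p) ∧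
      ∃ s : Finset (Fin 4), s.card = 3 ∧ l ∈ convexHull ℝ (p '' ↑s) := by
  -- point m on segment p2–p0 with first coordinate l.1
  obtain ⟨m, hmseg, hmx, _, _⟩ := seg_x (p 2) (p 0) l.1 h2.1 h0.1
  have key : ∃ s : Finset (Fin 4), s.card = 3 ∧ l ∈ convexHull ℝ (p '' ↑s) := by
    rcases le_total l.2 m.2 with hm | hm
    · -- use p2, p3, p0 : take w on segment p2–p3 with w.1 = l.1, w.2 ≤ l.2
      obtain ⟨w, hwseg, hwx, _, hwy⟩ := seg_x (p 2) (p 3) l.1 h2.1 h3.1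
      have hwy' : w.2 ≤ l.2 := hwy.trans (max_le h2.2 h3.2)
      refine ⟨{0, 2, 3}, by decide, ?_⟩
      have hsub : {p 2, p 3, p 0} ⊆ p '' (↑({0, 2, 3} : Finset (Fin 4)) : Set (Fin 4)) := by
        intro x hx
        rcases hx with h | h | h <;> subst h
        · exact ⟨2, by simp, rfl⟩
        · exact ⟨3, by simp, rfl⟩
        · exact ⟨0, by simp, rfl⟩
      have hmh : m ∈ convexHull ℝ (p '' (↑({0, 2, 3} : Finset (Fin 4)) : Set (Fin 4))) :=
        segment_subset_convexHull (hsub (by simp)) (hsub (by simp)) hmseg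
      have hwh : w ∈ convexHull ℝ (p '' (↑({0, 2, 3} : Finset (Fin 4)) : Set (Fin 4))) :=
        segment_subset_convexHull (hsub (by simp)) (hsub (by simp)) hwseg
      have : (w.1, l.2) ∈ segment ℝ w m := seg_y w m l.2 (hwx.trans hmx.symm) hwy' hm
      have hl : l = (w.1, l.2) := by rw [hwx]
      rw [hl]
      exact (convex_convexHull ℝ _).segment_subset hwh hmh this
    · -- use p0, p1, p2 : take q on segment p1–p0 with q.1 = l.1, q.2 ≥ l.2
      obtain ⟨q, hqseg, hqx, hqy, _⟩ := seg_x (p 1) (p 0) l.1 h1.1 h0.1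
      have hqy' : l.2 ≤ q.2 := (le_min h1.2 h0.2).trans hqy
      refine ⟨{0, 1, 2}, by decide, ?_⟩
      have hsub : {p 1, p 0, p 2} ⊆ p '' (↑({0, 1, 2} : Finset (Fin 4)) : Set (Fin 4)) := by
        intro x hx
        rcases hx with h | h | h <;> subst h
        · exact ⟨1, by simp, rfl⟩
        · exact ⟨0, by simp, rfl⟩
        · exact ⟨2, by simp, rfl⟩
      have hmh : m ∈ convexHull ℝ (p '' (↑({0, 1, 2} : Finset (Fin 4)) : Set (Fin 4))) :=
        segment_subset_convexHull (hsub (by simp)) (hsub (by simp)) hmseg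
      have hqh : q ∈ convexHull ℝ (p '' (↑({0, 1, 2} : Finset (Fin 4)) : Set (Fin 4))) :=
        segment_subset_convexHull (hsub (by simp)) (hsub (by simp)) hqseg
      have : (m.1, l.2) ∈ segment ℝ m q := seg_y m q l.2 (hmx.trans hqx.symm) hm hqy'
      have hl : l = (m.1, l.2) := by rw [hmx]
      rw [hl]
      exact (convex_convexHull ℝ _).segment_subset hmh hqh this
  obtain ⟨s, hs, hl⟩ := key
  refine ⟨convexHull_mono ?_ hl, s, hs, hl⟩
  rintro x ⟨i, _, rfl⟩
  exact ⟨i, rfl⟩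
end

section
/- Let κ = {p₀,…,p_m} be m+1 affinely independent points in ℝ^m and l a point with l ∉ conv(κ). Then ∑_{k=0}^{m} vol(conv((κ \ {p_k}) ∪ {l})) > vol(conv(κ)). -/
open Set MeasureTheory Finset Pointwise

lemma det_id_add_smulRight {m : ℕ} (f : (Fin m → ℝ) →ₗ[ℝ] ℝ) (v : Fin m → ℝ) :
    LinearMap.det (LinearMap.id + f.smulRight v) = 1 + f v := by
  classical
  rw [← LinearMap.det_toMatrix (Pi.basisFun ℝ (Fin m))]
  set A : Matrix (Fin m) Unit ℝ := Matrix.of fun i _ => v i with hA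
  set B : Matrix Unit (Fin m) ℝ := Matrix.of fun _ j => f (Pi.single j 1) with hB
  have h1 : LinearMap.toMatrix (Pi.basisFun ℝ (Fin m)) (Pi.basisFun ℝ (Fin m))
      (LinearMap.id + f.smulRight v) = 1 + A * B := by
    ext i j
    simp [LinearMap.toMatrix_apply, Matrix.mul_apply, Matrix.one_apply, hA, hB,
      Pi.single_apply, mul_comm, eq_comm, Pi.basisFun_apply]
  rw [h1, Matrix.det_one_add_mul_comm, Matrix.det_unique]
  simp only [Matrix.add_apply, Matrix.one_apply_eq, Matrix.mul_apply, hA, hB, Matrix.of_apply]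
  have h2 : ∀ i : Fin m, (fun j => if i = j then (1:ℝ) else 0) = Pi.single i 1 := by
    intro i; funext j; simp [Pi.single_apply, eq_comm]
  rw [f.pi_apply_eq_sum_univ v]
  simp only [h2]
  simp [mul_comm]

lemma vol_subsimplex {m : ℕ} (b : AffineBasis (Fin (m + 1)) ℝ (Fin m → ℝ))
    (l : Fin m → ℝ) (k : Fin (m + 1)) :
    volume (convexHull ℝ (insert l ((⇑b) '' {i | i ≠ k}))) =
      ENNReal.ofReal |b.coord k l| * volume (convexHull ℝ (Set.range ⇑b)) := by
  classical
  set v : Fin m → ℝ := l - b k with hv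
  set f : (Fin m → ℝ) →ₗ[ℝ] ℝ := (b.coord k).linear with hf
  set L : (Fin m → ℝ) →ₗ[ℝ] (Fin m → ℝ) := LinearMap.id + f.smulRight v with hL
  set T : (Fin m → ℝ) →ᵃ[ℝ] (Fin m → ℝ) :=
    { toFun := fun x => x + b.coord k x • v
      linear := L
      map_vadd' := by
        intro x u
        have h := (b.coord k).map_vadd x u
        simp only [vadd_eq_add] at h ⊢
        rw [h, hL]
        simp only [LinearMap.add_apply, LinearMap.id_apply, LinearMap.smulRight_apply, hf]
        rw [add_smul]
        abel } with hT
  have hdet : LinearMap.det L = b.coord k l := by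
    rw [hL, det_id_add_smulRight, hf, hv]
    have := (b.coord k).linearMap_vsub l (b k)
    simp only [vsub_eq_sub] at this
    rw [this, b.coord_apply_eq k]
    ring
  -- T maps the simplex to the subsimplex
  have himg : T '' (Set.range ⇑b) = insert l ((⇑b) '' {i | i ≠ k}) := by
    have hTb : ∀ i, T (b i) = if i = k then l else b i := by
      intro i
      show b i + b.coord k (b i) • v = _
      by_cases h : i = k
      · subst h
        simp [b.coord_apply_eq, hv]
      · simp [b.coord_apply_ne (Ne.symm h), h]
    ext x
    simp only [Set.mem_image, Set.mem_range, Set.mem_insert_iff, Set.mem_setOf_eq]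
    constructor
    · rintro ⟨y, ⟨i, rfl⟩, rfl⟩
      rw [hTb i]
      by_cases h : i = k
      · simp [h]
      · right; exact ⟨i, h, by simp [h]⟩
    · rintro (rfl | ⟨i, hi, rfl⟩)
      · exact ⟨b k, ⟨k, rfl⟩, by rw [hTb k]; simp⟩
      · exact ⟨b i, ⟨i, rfl⟩, by rw [hTb i]; simp [hi]⟩
  have hTL : ∀ x, T x = b.coord k 0 • v + L x := by
    intro x
    show x + b.coord k x • v = _
    have : b.coord k x = f x + b.coord k 0 := by
      have := (b.coord k).map_vadd 0 x
      simp only [vadd_eq_add, add_zero] at this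
      rw [this]
    rw [this, add_smul, hL]
    simp only [LinearMap.add_apply, LinearMap.id_apply, LinearMap.smulRight_apply]
    abel
  have himg2 : ∀ s : Set (Fin m → ℝ), T '' s = (b.coord k 0 • v) +ᵥ (L '' s) := by
    intro s
    rw [← Set.image_vadd, Set.image_image]
    exact Set.image_congr fun x _ => by rw [hTL x]; rfl
  rw [← himg, ← AffineMap.image_convexHull, himg2, measure_vadd,
    Measure.addHaar_image_linearMap, hdet]


/-- Convex hull inclusion test, exterior case: if `l` lies outside the convex hull of
the affinely independent points `p 0, …, p m` of `ℝ^m`, then the total volume of the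
`m+1` simplices obtained by replacing one vertex by `l` strictly exceeds the volume of
the original simplex. -/
theorem sum_subsimplex_volumes_gt {m : ℕ}
    (p : Fin (m + 1) → (Fin m → ℝ)) (hp : AffineIndependent ℝ p)
    (l : Fin m → ℝ) (hl : l ∉ convexHull ℝ (Set.range p)) :
    ∑ k : Fin (m + 1),
        volume (convexHull ℝ (insert l (p '' {i | i ≠ k}))) >
      volume (convexHull ℝ (Set.range p)) := by
  classical
  have htop : affineSpan ℝ (Set.range p) = ⊤ := by
    rw [hp.affineSpan_eq_top_iff_card_eq_finrank_add_one]
    simp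
  let b : AffineBasis (Fin (m + 1)) ℝ (Fin m → ℝ) := ⟨p, hp, htop⟩
  have hb : ⇑b = p := rfl
  set V := volume (convexHull ℝ (Set.range p)) with hV
  have hVpos : 0 < V := by
    refine MeasureTheory.Measure.measure_pos_of_nonempty_interior _ ?_
    rw [← hb]
    exact ⟨_, b.centroid_mem_interior_convexHull⟩
  have hVne : V ≠ ⊤ := (((Set.finite_range p).isCompact_convexHull ℝ).measure_lt_top).ne
  have hw1 : ∑ k, b.coord k l = 1 := b.sum_coord_apply_eq_one l
  have hneg : ∃ k, b.coord k l < 0 := by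
    by_contra h
    push_neg at h
    exact hl (by rw [← hb, b.convexHull_eq_nonneg_coord]; exact h)
  obtain ⟨k0, hk0⟩ := hneg
  have hsum : 1 < ∑ k, |b.coord k l| := by
    rw [← hw1]
    exact Finset.sum_lt_sum (fun i _ => le_abs_self _)
      ⟨k0, Finset.mem_univ _, by rw [abs_of_neg hk0]; linarith⟩
  have hterm : ∀ k, volume (convexHull ℝ (insert l (p '' {i | i ≠ k}))) =
      ENNReal.ofReal |b.coord k l| * V := by
    intro k
    rw [hV, ← hb]
    exact vol_subsimplex b l k
  simp only [hterm]
  rw [← Finset.sum_mul, ← ENNReal.ofReal_sum_of_nonneg (fun i _ => abs_nonneg _)]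
  calc V = 1 * V := (one_mul V).symm
    _ < ENNReal.ofReal (∑ k, |b.coord k l|) * V := by
        rw [ENNReal.mul_lt_mul_iff_left hVpos.ne' hVne, ← ENNReal.ofReal_one]
        exact ENNReal.ofReal_lt_ofReal_iff (by linarith) |>.mpr hsum
end
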